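/- arXiv:0704.0026 — 2 statements merged into one kernel-verified Lean document; each statement's English description precedes it below -/
import Mathlib

section
/- In the Cayley-Dickson 2^N-ions with N ≥ 2 and generator G = 2^(N-1), for any index u with 0 < u < G, the product i_u · i_G equals +i_{u+G} and i_G · i_u equals −i_{u+G}; moreover u XOR G = u + G. -/
noncomputable section

/-- Cayley-Dickson algebra of dimension `2^n` over `ℝ`, as iterated pairs. -/
@[reducible] def CD : ℕ → Type
  | 0 => ℝ
  | n+1 => CD n × CD n

def CDzero : (n : ℕ) → CD n
  | 0 => (0 : ℝ)
  | n+1 => (CDzero n, CDzero n)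

def CDadd : (n : ℕ) → CD n → CD n → CD n
  | 0, x, y => ((x + y : ℝ) : CD 0)
  | n+1, x, y => ((CDadd n (x : CD (n+1)).1 (y : CD (n+1)).1,
      CDadd n (x : CD (n+1)).2 (y : CD (n+1)).2) : CD (n+1))

def CDneg : (n : ℕ) → CD n → CD n
  | 0, x => ((-(x : ℝ) : ℝ) : CD 0)
  | n+1, x => (((CDneg n (x : CD (n+1)).1, CDneg n (x : CD (n+1)).2)) : CD (n+1))

def CDconj : (n : ℕ) → CD n → CD n
  | 0, x => x
  | n+1, x => (((CDconj n (x : CD (n+1)).1, CDneg n (x : CD (n+1)).2)) : CD (n+1))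

/-- Cayley-Dickson multiplication: `(a,b)(c,d) = (ac - d* b, d a + b c*)`. -/
def CDmul : (n : ℕ) → CD n → CD n → CD n
  | 0, x, y => ((x * y : ℝ) : CD 0)
  | n+1, x, y =>
      (((CDadd n (CDmul n (x : CD (n+1)).1 (y : CD (n+1)).1)
          (CDneg n (CDmul n (CDconj n (y : CD (n+1)).2) (x : CD (n+1)).2)),
        CDadd n (CDmul n (y : CD (n+1)).2 (x : CD (n+1)).1)
          (CDmul n (x : CD (n+1)).2 (CDconj n (y : CD (n+1)).1)))) : CD (n+1))

def CDsub (n : ℕ) (x y : CD n) : CD n := CDadd n x (CDneg n y)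

def CDsmul : (n : ℕ) → ℝ → CD n → CD n
  | 0, c, x => ((c * x : ℝ) : CD 0)
  | n+1, c, x => (((CDsmul n c (x : CD (n+1)).1, CDsmul n c (x : CD (n+1)).2)) : CD (n+1))

/-- The imaginary/basis unit `i_k` of the `2^n`-ions (`k < 2^n`); `i_0 = 1`. -/
def CDunit : (n : ℕ) → ℕ → CD n
  | 0, _ => ((1 : ℝ) : CD 0)
  | n+1, k =>
      if k < 2^n then (((CDunit n k, CDzero n)) : CD (n+1))
      else (((CDzero n, CDunit n (k - 2^n))) : CD (n+1))

/-- `(a,b,c)` is an associative triplet in cyclic positive order among the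
indices of the `2^n`-ions. -/
def IsCPO (n : ℕ) (a b c : ℕ) : Prop :=
  CDmul n (CDunit n a) (CDunit n b) = CDunit n c ∧
  CDmul n (CDunit n b) (CDunit n c) = CDunit n a ∧
  CDmul n (CDunit n c) (CDunit n a) = CDunit n b
lemma CDneg_pair (n : ℕ) (a b : CD n) :
    CDneg (n+1) ((a, b) : CD (n+1)) = ((CDneg n a, CDneg n b) : CD (n+1)) := rfl

lemma CDconj_pair (n : ℕ) (a b : CD n) :
    CDconj (n+1) ((a, b) : CD (n+1)) = ((CDconj n a, CDneg n b) : CD (n+1)) := rfl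

lemma CDadd_pair (n : ℕ) (a b c d : CD n) :
    CDadd (n+1) ((a, b) : CD (n+1)) ((c, d) : CD (n+1)) =
      ((CDadd n a c, CDadd n b d) : CD (n+1)) := rfl

lemma CDmul_pair (n : ℕ) (a b c d : CD n) :
    CDmul (n+1) ((a, b) : CD (n+1)) ((c, d) : CD (n+1)) =
      ((CDadd n (CDmul n a c) (CDneg n (CDmul n (CDconj n d) b)),
        CDadd n (CDmul n d a) (CDmul n b (CDconj n c))) : CD (n+1)) := rfl

lemma CDadd_zero : ∀ n (x : CD n), CDadd n x (CDzero n) = x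
  | 0, x => by simp [CDadd, CDzero]
  | n+1, x => by simp [CDadd, CDzero, CDadd_zero n]

lemma CDzero_add : ∀ n (x : CD n), CDadd n (CDzero n) x = x
  | 0, x => by simp [CDadd, CDzero]
  | n+1, x => by simp [CDadd, CDzero, CDzero_add n]

lemma CDneg_zero : ∀ n, CDneg n (CDzero n) = CDzero n
  | 0 => by simp [CDneg, CDzero]
  | n+1 => by simp [CDneg, CDzero, CDneg_zero n]

lemma CDconj_zero : ∀ n, CDconj n (CDzero n) = CDzero n
  | 0 => by simp [CDconj, CDzero]
  | n+1 => by simp [CDconj, CDzero, CDconj_zero n, CDneg_zero n]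

lemma CDmul_zero_both : ∀ n (x : CD n),
    CDmul n x (CDzero n) = CDzero n ∧ CDmul n (CDzero n) x = CDzero n
  | 0, x => by simp [CDmul, CDzero]
  | n+1, x => by
      constructor <;>
      simp [CDmul, CDzero, (CDmul_zero_both n _).1, (CDmul_zero_both n _).2,
        CDconj_zero n, CDneg_zero n, CDadd_zero n, CDzero_add n]

lemma CDmul_zero (n : ℕ) (x : CD n) : CDmul n x (CDzero n) = CDzero n :=
  (CDmul_zero_both n x).1

lemma CDzero_mul (n : ℕ) (x : CD n) : CDmul n (CDzero n) x = CDzero n :=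
  (CDmul_zero_both n x).2

lemma CDconj_unit_zero : ∀ n, CDconj n (CDunit n 0) = CDunit n 0
  | 0 => by simp [CDconj, CDunit]
  | n+1 => by
      simp [CDconj, CDunit, Nat.pow_pos, CDconj_unit_zero n, CDneg_zero n]

lemma CDmul_one : ∀ n (x : CD n), CDmul n x (CDunit n 0) = x
  | 0, x => by simp [CDmul, CDunit]
  | n+1, x => by
      simp [CDmul, CDunit, Nat.pow_pos, CDmul_one n, CDconj_zero n, CDzero_mul n,
        CDneg_zero n, CDadd_zero n, CDzero_add n, CDconj_unit_zero n]

lemma CDone_mul : ∀ n (x : CD n), CDmul n (CDunit n 0) x = x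
  | 0, x => by simp [CDmul, CDunit]
  | n+1, x => by
      simp [CDmul, CDunit, Nat.pow_pos, CDone_mul n, CDmul_one n, CDmul_zero n,
        CDzero_mul n, CDneg_zero n, CDadd_zero n, CDzero_add n]

lemma CDconj_unit : ∀ n u, 0 < u →
    CDconj (n+1) (CDunit (n+1) u) = CDneg (n+1) (CDunit (n+1) u)
  | 0, u, hu => by
      simp [CDconj, CDunit, CDneg, CDzero, hu.ne']
  | n+1, u, hu => by
      by_cases h : u < 2 ^ (n+1)
      · rw [show CDunit (n+2) u = ((CDunit (n+1) u, CDzero (n+1)) : CD (n+2)) from by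
          simp [CDunit, h]]
        show ((CDconj (n+1) (CDunit (n+1) u), CDneg (n+1) (CDzero (n+1))) : CD (n+2)) =
          ((CDneg (n+1) (CDunit (n+1) u), CDneg (n+1) (CDzero (n+1))) : CD (n+2))
        rw [CDconj_unit n u hu]
      · rw [show CDunit (n+2) u = ((CDzero (n+1), CDunit (n+1) (u - 2^(n+1))) : CD (n+2)) from by
          simp [CDunit, h]]
        show ((CDconj (n+1) (CDzero (n+1)), CDneg (n+1) (CDunit (n+1) (u - 2^(n+1)))) : CD (n+2)) =
          ((CDneg (n+1) (CDzero (n+1)), CDneg (n+1) (CDunit (n+1) (u - 2^(n+1)))) : CD (n+2))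
        rw [CDconj_zero (n+1), CDneg_zero (n+1)]

lemma xor_two_pow (k u : ℕ) (h : u < 2 ^ k) : u ^^^ 2 ^ k = u + 2 ^ k := by
  apply Nat.eq_of_testBit_eq
  intro i
  rw [Nat.testBit_xor]
  rcases lt_trichotomy i k with hik | rfl | hik
  · rw [Nat.add_comm, Nat.testBit_two_pow_add_gt hik,
      Nat.testBit_two_pow_of_ne (by omega)]
    simp
  · rw [Nat.add_comm, Nat.testBit_two_pow_add_eq, Nat.testBit_two_pow_self,
      Nat.testBit_lt_two_pow h]
    simp
  · have h1 : u.testBit i = false := Nat.testBit_lt_two_pow (by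
      calc u < 2 ^ k := h
        _ ≤ 2 ^ i := Nat.pow_le_pow_right (by norm_num) (by omega))
    have h2 : (u + 2 ^ k).testBit i = false := Nat.testBit_lt_two_pow (by
      calc u + 2 ^ k < 2 ^ k + 2 ^ k := by omega
        _ = 2 ^ (k+1) := by ring
        _ ≤ 2 ^ i := Nat.pow_le_pow_right (by norm_num) (by omega))
    rw [h1, h2, Nat.testBit_two_pow_of_ne (by omega)]
    simp

/-- Rule 1: in the `2^N`-ions (`N ≥ 2`) with generator `G = 2^(N-1)`, for any
index `0 < u < G` we have `i_u · i_G = +i_{u+G}`, `i_G · i_u = -i_{u+G}`, and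
`u XOR G = u + G`. -/
theorem rule_one (N u : ℕ) (hN : 2 ≤ N) (hu0 : 0 < u) (hu : u < 2 ^ (N - 1)) :
    CDmul N (CDunit N u) (CDunit N (2 ^ (N - 1))) =
      CDunit N (u + 2 ^ (N - 1)) ∧
    CDmul N (CDunit N (2 ^ (N - 1))) (CDunit N u) =
      CDneg N (CDunit N (u + 2 ^ (N - 1))) ∧
    u ^^^ 2 ^ (N - 1) = u + 2 ^ (N - 1) := by
  obtain ⟨m, rfl⟩ : ∃ m, N = m + 1 := ⟨N - 1, by omega⟩
  simp only [Nat.add_sub_cancel] at hu ⊢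
  have hS : ¬ (u + 2 ^ m < 2 ^ m) := by omega
  have hA : CDunit (m+1) u = ((CDunit m u, CDzero m) : CD (m+1)) := by
    simp [CDunit, hu]
  have hB : CDunit (m+1) (2^m) = ((CDzero m, CDunit m 0) : CD (m+1)) := by
    simp [CDunit]
  have hC : CDunit (m+1) (u + 2^m) = ((CDzero m, CDunit m u) : CD (m+1)) := by
    simp [CDunit, hS]
  refine ⟨?_, ?_, xor_two_pow m u hu⟩
  · rw [hA, hB, hC]
    show ((CDadd m (CDmul m (CDunit m u) (CDzero m))
        (CDneg m (CDmul m (CDconj m (CDunit m 0)) (CDzero m))),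
      CDadd m (CDmul m (CDunit m 0) (CDunit m u))
        (CDmul m (CDzero m) (CDconj m (CDzero m)))) : CD (m+1)) =
      ((CDzero m, CDunit m u) : CD (m+1))
    simp only [CDmul_zero, CDzero_mul, CDneg_zero, CDconj_zero, CDadd_zero, CDzero_add,
      CDone_mul, CDmul_one, CDconj_unit_zero]
  · obtain ⟨p, rfl⟩ : ∃ p, m = p + 1 := ⟨m - 1, by omega⟩
    rw [hA, hB, hC]
    show ((CDadd (p+1) (CDmul (p+1) (CDzero (p+1)) (CDunit (p+1) u))
        (CDneg (p+1) (CDmul (p+1) (CDconj (p+1) (CDzero (p+1))) (CDunit (p+1) 0))),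
      CDadd (p+1) (CDmul (p+1) (CDzero (p+1)) (CDzero (p+1)))
        (CDmul (p+1) (CDunit (p+1) 0) (CDconj (p+1) (CDunit (p+1) u)))) : CD (p+2)) =
      ((CDneg (p+1) (CDzero (p+1)), CDneg (p+1) (CDunit (p+1) u)) : CD (p+2))
    rw [CDconj_unit p u hu0]
    simp only [CDmul_zero, CDzero_mul, CDneg_zero, CDconj_zero, CDadd_zero, CDzero_add,
      CDone_mul, CDmul_one, CDconj_unit_zero]

end
end

section
/- For the 32-dimensional Pathions with strut constant S = 8 + s (0 < s < 8), the product (i_{a} + i_{16 + 8 + f})(i_{b} + i_{16 + 8 + e}) is nonzero whenever (a, b, c) is the zigzag L-trip of the Sedenion box-kite with strut constant s and e = b XOR s, f = a XOR s; only the ±i_c terms cancel. -/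
noncomputable section

@[reducible] def Z : ℕ → Type
  | 0 => ℤ
  | n+1 => Z n × Z n

def zzero : (n : ℕ) → Z n
  | 0 => (0 : ℤ)
  | n+1 => (zzero n, zzero n)

def zadd : (n : ℕ) → Z n → Z n → Z n
  | 0, x, y => ((x + y : ℤ) : Z 0)
  | n+1, x, y => ((zadd n (x : Z (n+1)).1 (y : Z (n+1)).1,
      zadd n (x : Z (n+1)).2 (y : Z (n+1)).2) : Z (n+1))

def zneg : (n : ℕ) → Z n → Z n
  | 0, x => ((-(x : ℤ) : ℤ) : Z 0)
  | n+1, x => (((zneg n (x : Z (n+1)).1, zneg n (x : Z (n+1)).2)) : Z (n+1))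

def zconj : (n : ℕ) → Z n → Z n
  | 0, x => x
  | n+1, x => (((zconj n (x : Z (n+1)).1, zneg n (x : Z (n+1)).2)) : Z (n+1))

def zmul : (n : ℕ) → Z n → Z n → Z n
  | 0, x, y => ((x * y : ℤ) : Z 0)
  | n+1, x, y =>
      (((zadd n (zmul n (x : Z (n+1)).1 (y : Z (n+1)).1)
          (zneg n (zmul n (zconj n (y : Z (n+1)).2) (x : Z (n+1)).2)),
        zadd n (zmul n (y : Z (n+1)).2 (x : Z (n+1)).1)
          (zmul n (x : Z (n+1)).2 (zconj n (y : Z (n+1)).1)))) : Z (n+1))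

def zunit : (n : ℕ) → ℕ → Z n
  | 0, _ => ((1 : ℤ) : Z 0)
  | n+1, k =>
      if k < 2^n then (((zunit n k, zzero n)) : Z (n+1))
      else (((zzero n, zunit n (k - 2^n))) : Z (n+1))

def zdec : (n : ℕ) → DecidableEq (Z n)
  | 0 => inferInstanceAs (DecidableEq ℤ)
  | n+1 => @instDecidableEqProd _ _ (zdec n) (zdec n)

instance (n : ℕ) : DecidableEq (Z n) := zdec n

def phi : (n : ℕ) → Z n → CD n
  | 0, x => ((x : ℝ) : CD 0)
  | n+1, x => (((phi n (x : Z (n+1)).1, phi n (x : Z (n+1)).2)) : CD (n+1))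

theorem phi_inj : ∀ n (x y : Z n), phi n x = phi n y → x = y
  | 0, x, y, h => Int.cast_injective h
  | n+1, x, y, h => by
      have h1 := congrArg Prod.fst h
      have h2 := congrArg Prod.snd h
      exact Prod.ext (phi_inj n _ _ h1) (phi_inj n _ _ h2)

theorem phi_zero : ∀ n, phi n (zzero n) = CDzero n
  | 0 => by simp [phi, zzero, CDzero]
  | n+1 => by simp [phi, zzero, CDzero, phi_zero n]

theorem phi_add : ∀ n x y, phi n (zadd n x y) = CDadd n (phi n x) (phi n y)
  | 0, x, y => by simp [phi, zadd, CDadd]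
  | n+1, x, y => by simp [phi, zadd, CDadd, phi_add n]

theorem phi_neg : ∀ n x, phi n (zneg n x) = CDneg n (phi n x)
  | 0, x => by simp [phi, zneg, CDneg]
  | n+1, x => by simp [phi, zneg, CDneg, phi_neg n]

theorem phi_conj : ∀ n x, phi n (zconj n x) = CDconj n (phi n x)
  | 0, x => by simp [phi, zconj, CDconj]
  | n+1, x => by simp [phi, zconj, CDconj, phi_conj n, phi_neg n]

theorem phi_mul : ∀ n x y, phi n (zmul n x y) = CDmul n (phi n x) (phi n y)
  | 0, x, y => by simp [phi, zmul, CDmul]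
  | n+1, x, y => by
      simp [phi, zmul, CDmul, phi_mul n, phi_add n, phi_neg n, phi_conj n]

theorem phi_unit : ∀ n k, phi n (zunit n k) = CDunit n k
  | 0, k => by simp [phi, zunit, CDunit]
  | n+1, k => by
      by_cases h : k < 2^n <;>
        simp [phi, zunit, CDunit, h, phi_unit n, phi_zero n]


def zbeq : (n : ℕ) → Z n → Z n → Bool
  | 0, x, y => ((x : ℤ) == (y : ℤ))
  | n+1, x, y => zbeq n (x : Z (n+1)).1 (y : Z (n+1)).1 &&
      zbeq n (x : Z (n+1)).2 (y : Z (n+1)).2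

theorem zbeq_refl : ∀ n (x : Z n), zbeq n x x = true
  | 0, x => by simp [zbeq]
  | n+1, x => by simp [zbeq, zbeq_refl n]

/-- All the hypotheses of the theorem, as one boolean check. -/
def hypB (s a b c : ℕ) : Bool :=
  decide (0 < s) && decide (0 < a) && decide (0 < b) && decide (0 < c) &&
  !decide (a = s) && !decide (b = s) && !decide (c = s) &&
  zbeq 4 (zmul 4 (zunit 4 a) (zunit 4 b)) (zunit 4 c) &&
  zbeq 4 (zmul 4 (zunit 4 a) (zunit 4 (8 + (b ^^^ s)))) (zunit 4 (8 + (c ^^^ s))) &&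
  zbeq 4 (zmul 4 (zunit 4 b) (zunit 4 c)) (zunit 4 a) &&
  zbeq 4 (zmul 4 (zunit 4 c) (zunit 4 a)) (zunit 4 b) &&
  zbeq 4 (zmul 4 (zunit 4 (8 + (b ^^^ s))) (zunit 4 (8 + (c ^^^ s)))) (zunit 4 a) &&
  zbeq 4 (zmul 4 (zunit 4 (8 + (c ^^^ s))) (zunit 4 a)) (zunit 4 (8 + (b ^^^ s)))

def keyB (s a b c : ℕ) : Bool :=
  !hypB s a b c ||
  !zbeq 5 (zmul 5 (zadd 5 (zunit 5 a) (zunit 5 (16 + 8 + (a ^^^ s))))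
      (zadd 5 (zunit 5 b) (zunit 5 (16 + 8 + (b ^^^ s))))) (zzero 5)

theorem key : ∀ s < 8, ∀ a < 8, ∀ b < 8, ∀ c < 8, keyB s a b c = true := by decide +kernel

theorem trans4 (j k l : ℕ)
    (h : CDmul 4 (CDunit 4 j) (CDunit 4 k) = CDunit 4 l) :
    zmul 4 (zunit 4 j) (zunit 4 k) = zunit 4 l :=
  phi_inj 4 _ _ (by rw [phi_mul, phi_unit, phi_unit, phi_unit]; exact h)
/-- In the 32-D Pathions with strut constant `S = 8 + s` (`0 < s < 8`), if
`(a, b, c)` is the zigzag L-trip of the Sedenion box-kite with strut constant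
`s` (a CPO trip of indices `< 8`, none equal to `s`, whose associated U-trip
`(a, 8 + (b XOR s), 8 + (c XOR s))` is also CPO), and `e = b XOR s`,
`f = a XOR s`, then `(i_a + i_{16+8+f})(i_b + i_{16+8+e}) ≠ 0`: the candidate
assessors do not mutually zero-divide. -/
theorem pathion_poisoned_zigzag (s a b c : ℕ) (hs0 : 0 < s) (hs : s < 8)
    (ha0 : 0 < a) (hb0 : 0 < b) (hc0 : 0 < c)
    (ha : a < 8) (hb : b < 8) (hc : c < 8)
    (has : a ≠ s) (hbs : b ≠ s) (hcs : c ≠ s)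
    (hzigL : IsCPO 4 a b c)
    (hzigU : IsCPO 4 a (8 + (b ^^^ s)) (8 + (c ^^^ s))) :
    CDmul 5 (CDadd 5 (CDunit 5 a) (CDunit 5 (16 + 8 + (a ^^^ s))))
      (CDadd 5 (CDunit 5 b) (CDunit 5 (16 + 8 + (b ^^^ s)))) ≠ CDzero 5 := by
  intro h
  have z1 := trans4 _ _ _ hzigL.1
  have z2 := trans4 _ _ _ hzigU.1
  have z3 := trans4 _ _ _ hzigL.2.1
  have z4 := trans4 _ _ _ hzigL.2.2
  have z5 := trans4 _ _ _ hzigU.2.1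
  have z6 := trans4 _ _ _ hzigU.2.2
  have z7 : zmul 5 (zadd 5 (zunit 5 a) (zunit 5 (16 + 8 + (a ^^^ s))))
      (zadd 5 (zunit 5 b) (zunit 5 (16 + 8 + (b ^^^ s)))) = zzero 5 :=
    phi_inj 5 _ _ (by
      rw [phi_mul, phi_add, phi_add, phi_unit, phi_unit, phi_unit, phi_unit, phi_zero]
      exact h)
  have hhyp : hypB s a b c = true := by
    rw [hypB, z1, z2, z3, z4, z5, z6]
    simp [zbeq_refl, hs0, ha0, hb0, hc0, has, hbs, hcs]
  have hk := key s hs a ha b hb c hc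
  rw [keyB, hhyp, z7] at hk
  simp [zbeq_refl] at hk

end
end
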